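/- arXiv:2107.05405 — 3 statements merged into one kernel-verified Lean document; each statement's English description precedes it below -/
import Mathlib

section
/- Let X be a real matrix with full column rank, D a diagonal matrix with strictly positive diagonal entries, P a substochastic matrix (nonnegative entries with row sums at most 1), and suppose the row vector 1^T D (I - P) is entrywise strictly positive. Then the matrix X^T D (I - P) X is positive definite. -/
open Matrix Finset

lemma quad_eq {n : ℕ} (d : Fin n → ℝ) (P : Matrix (Fin n) (Fin n) ℝ) (y : Fin n → ℝ) :
    y ⬝ᵥ ((Matrix.diagonal d * (1 - P)).mulVec y)
      = ∑ i, d i * y i ^ 2 - ∑ i, ∑ j, d i * P i j * (y i * y j) := by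
  simp only [dotProduct, Matrix.mulVec, Matrix.diagonal_mul, Matrix.sub_apply,
    Matrix.one_apply, Finset.mul_sum]
  rw [← Finset.sum_sub_distrib]
  refine Finset.sum_congr rfl fun i _ => ?_
  have h1 : d i * y i ^ 2 = ∑ j, (if i = j then d i * y i ^ 2 else 0) := by
    simp
  rw [h1, ← Finset.sum_sub_distrib]
  refine Finset.sum_congr rfl fun j _ => ?_
  by_cases h : i = j <;> simp [h] <;> ring

lemma quad_pos {n : ℕ} (d : Fin n → ℝ) (hd : ∀ s, 0 < d s)
    (P : Matrix (Fin n) (Fin n) ℝ)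
    (hP0 : ∀ i j, 0 ≤ P i j) (hP1 : ∀ i, ∑ j, P i j ≤ 1)
    (hpos : ∀ j, (∑ i, d i * P i j) < d j)
    (y : Fin n → ℝ) (hy : y ≠ 0) :
    0 < y ⬝ᵥ ((Matrix.diagonal d * (1 - P)).mulVec y) := by
  rw [quad_eq]
  -- bound the cross term
  have hB : ∑ i, ∑ j, d i * P i j * (y i * y j)
      ≤ ∑ i, ∑ j, d i * P i j * ((y i ^ 2 + y j ^ 2) / 2) := by
    refine Finset.sum_le_sum fun i _ => Finset.sum_le_sum fun j _ => ?_
    have h0 : 0 ≤ d i * P i j := mul_nonneg (hd i).le (hP0 i j)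
    nlinarith [sq_nonneg (y i - y j)]
  have h1 : ∀ i, (d i * ∑ j, P i j) / 2 * y i ^ 2
      = ∑ j, d i * P i j * (y i ^ 2 / 2) := by
    intro i
    rw [Finset.mul_sum, Finset.sum_div, Finset.sum_mul]
    exact Finset.sum_congr rfl fun j _ => by ring
  have h2 : ∀ i, (∑ j, d j * P j i) / 2 * y i ^ 2
      = ∑ j, d j * P j i * (y i ^ 2 / 2) := by
    intro i
    rw [Finset.sum_div, Finset.sum_mul]
    exact Finset.sum_congr rfl fun j _ => by ring
  have hsplit : ∑ i, ∑ j, d i * P i j * ((y i ^ 2 + y j ^ 2) / 2)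
      = ∑ i, ∑ j, d i * P i j * (y i ^ 2 / 2)
        + ∑ i, ∑ j, d j * P j i * (y i ^ 2 / 2) := by
    have hterm : ∀ i j : Fin n, d i * P i j * ((y i ^ 2 + y j ^ 2) / 2)
        = d i * P i j * (y i ^ 2 / 2) + d i * P i j * (y j ^ 2 / 2) := fun i j => by ring
    simp only [hterm, Finset.sum_add_distrib]
    congr 1
    exact Finset.sum_comm
  have hkey : ∑ i, (d i - d i * (∑ j, P i j) / 2 - (∑ j, d j * P j i) / 2) * y i ^ 2
      ≤ ∑ i, d i * y i ^ 2 - ∑ i, ∑ j, d i * P i j * (y i * y j) := by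
    have hle := le_trans hB (le_of_eq hsplit)
    have heq : ∑ i, (d i - d i * (∑ j, P i j) / 2 - (∑ j, d j * P j i) / 2) * y i ^ 2
        = ∑ i, d i * y i ^ 2 - (∑ i, ∑ j, d i * P i j * (y i ^ 2 / 2)
          + ∑ i, ∑ j, d j * P j i * (y i ^ 2 / 2)) := by
      rw [← Finset.sum_add_distrib, ← Finset.sum_sub_distrib]
      refine Finset.sum_congr rfl fun i _ => ?_
      have hra : (d i - d i * (∑ j, P i j) / 2 - (∑ j, d j * P j i) / 2) * y i ^ 2
          = d i * y i ^ 2 - ((d i * ∑ j, P i j) / 2 * y i ^ 2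
            + (∑ j, d j * P j i) / 2 * y i ^ 2) := by ring
      rw [hra, h1 i, h2 i]
    rw [heq]
    linarith
  refine lt_of_lt_of_le ?_ hkey
  have hc : ∀ i, 0 < d i - d i * (∑ j, P i j) / 2 - (∑ j, d j * P j i) / 2 := by
    intro i
    have h1 : d i * (∑ j, P i j) ≤ d i * 1 := by
      exact mul_le_mul_of_nonneg_left (hP1 i) (hd i).le
    have h2 := hpos i
    nlinarith
  obtain ⟨i0, hi0⟩ : ∃ i0, y i0 ≠ 0 := by
    by_contra h
    push_neg at h
    exact hy (funext h)
  refine Finset.sum_pos' (fun i _ => ?_) ⟨i0, Finset.mem_univ i0, ?_⟩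
  · exact mul_nonneg (hc i).le (sq_nonneg _)
  · exact mul_pos (hc i0) (by positivity)

theorem stmt_0 {n k : ℕ} (X : Matrix (Fin n) (Fin k) ℝ)
    (hX : ∀ v : Fin k → ℝ, X.mulVec v = 0 → v = 0)
    (d : Fin n → ℝ) (hd : ∀ s, 0 < d s)
    (P : Matrix (Fin n) (Fin n) ℝ)
    (hP0 : ∀ i j, 0 ≤ P i j) (hP1 : ∀ i, ∑ j, P i j ≤ 1)
    (hpos : ∀ j, 0 < ∑ i, ((Matrix.diagonal d) * (1 - P)) i j) :
    ∀ w : Fin k → ℝ, w ≠ 0 →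
      0 < w ⬝ᵥ (Xᵀ * (Matrix.diagonal d) * (1 - P) * X).mulVec w := by
  intro w hw
  have hpos' : ∀ j, (∑ i, d i * P i j) < d j := by
    intro j
    have h := hpos j
    simp only [Matrix.diagonal_mul, Matrix.sub_apply, Matrix.one_apply, mul_sub,
      Finset.sum_sub_distrib, mul_ite, mul_one, mul_zero, Finset.sum_ite_eq',
      Finset.mem_univ, if_true] at h
    linarith
  set y := X.mulVec w with hy
  have hy0 : y ≠ 0 := fun h => hw (hX w h)
  have hrw : w ⬝ᵥ (Xᵀ * (Matrix.diagonal d) * (1 - P) * X).mulVec w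
      = y ⬝ᵥ ((Matrix.diagonal d * (1 - P)).mulVec y) := by
    rw [Matrix.mul_assoc, Matrix.mul_assoc, ← Matrix.mulVec_mulVec,
      Matrix.dotProduct_mulVec, Matrix.vecMul_transpose, ← Matrix.mul_assoc,
      ← Matrix.mulVec_mulVec]
  rw [hrw]
  exact quad_pos d hd P hP0 hP1 hpos' y hy0
end

section
/- Let D be a diagonal matrix with strictly positive diagonal entries and P a substochastic matrix such that 1^T D (I - P) is entrywise strictly positive, where the diagonal entries of D are nonnegative off the restriction and the off-diagonal entries of D(I-P) are nonpositive. Then the symmetric matrix Y = D(I - P) + (D(I - P))^T is strictly diagonally dominant with positive diagonal, and hence positive definite. -/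
open Matrix Finset

lemma erase_sum_comm {n : ℕ} (f : Fin n → Fin n → ℝ) :
    ∑ i, ∑ j ∈ Finset.univ.erase i, f i j = ∑ j, ∑ i ∈ Finset.univ.erase j, f i j := by
  simp_rw [Finset.sum_erase_eq_sub (Finset.mem_univ _), Finset.sum_sub_distrib]
  rw [Finset.sum_comm]

lemma sdd_posdef {n : ℕ} (Y : Matrix (Fin n) (Fin n) ℝ)
    (hsym : ∀ i j, Y i j = Y j i)
    (hdom : ∀ i, ∑ j ∈ Finset.univ.erase i, |Y i j| < Y i i) :
    ∀ x : Fin n → ℝ, x ≠ 0 → 0 < x ⬝ᵥ Y.mulVec x := by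
  intro x hx
  have hterm : ∀ i, ∀ j ∈ Finset.univ.erase i,
      -(|Y i j| * x i ^ 2 / 2 + |Y i j| * x j ^ 2 / 2) ≤ x i * (Y i j * x j) := by
    intro i j _
    have h1 : |x i * (Y i j * x j)| ≤ |Y i j| * x i ^ 2 / 2 + |Y i j| * x j ^ 2 / 2 := by
      have e : |x i * (Y i j * x j)| = |Y i j| * (|x i| * |x j|) := by
        rw [abs_mul, abs_mul]; ring
      rw [e]
      nlinarith [sq_nonneg (|x i| - |x j|), abs_nonneg (Y i j), sq_abs (x i), sq_abs (x j),
        abs_nonneg (x i), abs_nonneg (x j), mul_nonneg (abs_nonneg (x i)) (abs_nonneg (x j))]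
    linarith [neg_abs_le (x i * (Y i j * x j))]
  have step1 : x ⬝ᵥ Y.mulVec x
      = ∑ i, (Y i i * x i ^ 2 + ∑ j ∈ Finset.univ.erase i, x i * (Y i j * x j)) := by
    simp only [dotProduct, mulVec, Finset.mul_sum]
    refine Finset.sum_congr rfl fun i _ => ?_
    rw [← Finset.add_sum_erase _ _ (Finset.mem_univ i)]
    ring_nf
  have swap : ∑ i, ∑ j ∈ Finset.univ.erase i, |Y i j| * x j ^ 2 / 2
      = ∑ i, ∑ j ∈ Finset.univ.erase i, |Y i j| * x i ^ 2 / 2 := by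
    rw [erase_sum_comm]
    exact Finset.sum_congr rfl fun i _ => Finset.sum_congr rfl fun j _ => by rw [hsym]
  have eq2 : ∑ i, (Y i i - ∑ j ∈ Finset.univ.erase i, |Y i j|) * x i ^ 2
      = ∑ i, (Y i i * x i ^ 2
          + ∑ j ∈ Finset.univ.erase i, -(|Y i j| * x i ^ 2 / 2 + |Y i j| * x j ^ 2 / 2)) := by
    simp_rw [sub_mul, Finset.sum_mul, neg_add, Finset.sum_add_distrib, Finset.sum_neg_distrib,
      Finset.sum_sub_distrib]
    rw [swap]
    have hB : ∑ i, ∑ j ∈ Finset.univ.erase i, |Y i j| * x i ^ 2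
        = (∑ i, ∑ j ∈ Finset.univ.erase i, |Y i j| * x i ^ 2 / 2)
          + ∑ i, ∑ j ∈ Finset.univ.erase i, |Y i j| * x i ^ 2 / 2 := by
      rw [← Finset.sum_add_distrib]
      refine Finset.sum_congr rfl fun i _ => ?_
      rw [← Finset.sum_add_distrib]
      exact Finset.sum_congr rfl fun j _ => by ring
    linarith
  have step2 : ∑ i, (Y i i - ∑ j ∈ Finset.univ.erase i, |Y i j|) * x i ^ 2 ≤ x ⬝ᵥ Y.mulVec x := by
    rw [step1, eq2]
    refine Finset.sum_le_sum fun i _ => ?_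
    exact add_le_add_right (Finset.sum_le_sum (hterm i)) _
  refine lt_of_lt_of_le ?_ step2
  obtain ⟨i0, hi0⟩ : ∃ i, x i ≠ 0 := Function.ne_iff.mp hx
  refine Finset.sum_pos' (fun i _ => mul_nonneg (sub_nonneg.2 (hdom i).le) (sq_nonneg _)) ?_
  refine ⟨i0, Finset.mem_univ _, mul_pos (sub_pos.2 (hdom i0)) ?_⟩
  positivity


theorem stmt_1 {n : ℕ}
    (d : Fin n → ℝ) (hd : ∀ s, 0 < d s)
    (P : Matrix (Fin n) (Fin n) ℝ)
    (hP0 : ∀ i j, 0 ≤ P i j) (hP1 : ∀ i, ∑ j, P i j ≤ 1)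
    (hpos : ∀ j, 0 < ∑ i, ((Matrix.diagonal d) * (1 - P)) i j) :
    let Y := (Matrix.diagonal d) * (1 - P) + ((Matrix.diagonal d) * (1 - P))ᵀ
    (∀ i, 0 < Y i i ∧ ∑ j ∈ Finset.univ.erase i, |Y i j| < |Y i i|) ∧
    (∀ x : Fin n → ℝ, x ≠ 0 → 0 < x ⬝ᵥ Y.mulVec x) := by
  intro Y
  have hAij : ∀ i j, ((Matrix.diagonal d) * (1 - P)) i j
      = d i * ((if i = j then (1:ℝ) else 0) - P i j) := by
    intro i j
    rw [Matrix.diagonal_mul]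
    simp [Matrix.sub_apply, Matrix.one_apply]
  have hYij : ∀ i j, Y i j = d i * ((if i = j then (1:ℝ) else 0) - P i j)
      + d j * ((if j = i then (1:ℝ) else 0) - P j i) := by
    intro i j
    show ((Matrix.diagonal d) * (1 - P)) i j + ((Matrix.diagonal d) * (1 - P)) j i
        = _
    rw [hAij, hAij]
  have hYd : ∀ i, Y i i = 2 * (d i * (1 - P i i)) := by
    intro i; rw [hYij]; simp; ring
  have hYo : ∀ i j, i ≠ j → Y i j = -(d i * P i j + d j * P j i) := by
    intro i j hij
    rw [hYij]
    simp [hij, Ne.symm hij]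
    ring
  have hsym : ∀ i j, Y i j = Y j i := by
    intro i j
    rw [hYij, hYij]
    by_cases h : i = j
    · subst h; ring
    · simp [h, Ne.symm h]; ring
  -- column fact from hpos
  have hcol : ∀ i, ∑ k ∈ Finset.univ.erase i, d k * P k i < d i * (1 - P i i) := by
    intro i
    have h := hpos i
    rw [← Finset.add_sum_erase _ _ (Finset.mem_univ i)] at h
    have e1 : ((Matrix.diagonal d) * (1 - P)) i i = d i * (1 - P i i) := by
      rw [hAij]; simp
    have e2 : ∑ k ∈ Finset.univ.erase i, ((Matrix.diagonal d) * (1 - P)) k i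
        = -∑ k ∈ Finset.univ.erase i, d k * P k i := by
      rw [← Finset.sum_neg_distrib]
      refine Finset.sum_congr rfl fun k hk => ?_
      rw [hAij]
      have : k ≠ i := (Finset.mem_erase.mp hk).1
      simp [this]
    rw [e1, e2] at h
    linarith
  have hrow : ∀ i, ∑ j ∈ Finset.univ.erase i, P i j ≤ 1 - P i i := by
    intro i
    have h := hP1 i
    rw [← Finset.add_sum_erase _ _ (Finset.mem_univ i)] at h
    linarith
  have hdom : ∀ i, ∑ j ∈ Finset.univ.erase i, |Y i j| < Y i i := by
    intro i
    have habs : ∀ j ∈ Finset.univ.erase i, |Y i j| = d i * P i j + d j * P j i := by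
      intro j hj
      have hij : i ≠ j := Ne.symm (Finset.mem_erase.mp hj).1
      rw [hYo i j hij, abs_neg, abs_of_nonneg]
      exact add_nonneg (mul_nonneg (hd i).le (hP0 i j)) (mul_nonneg (hd j).le (hP0 j i))
    rw [Finset.sum_congr rfl habs, Finset.sum_add_distrib, ← Finset.mul_sum, hYd]
    have h1 : d i * ∑ j ∈ Finset.univ.erase i, P i j ≤ d i * (1 - P i i) :=
      mul_le_mul_of_nonneg_left (hrow i) (hd i).le
    have h2 := hcol i
    have h3 : ∑ j ∈ Finset.univ.erase i, d j * P j i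
        = ∑ k ∈ Finset.univ.erase i, d k * P k i := rfl
    linarith
  have hYpos : ∀ i, 0 < Y i i := by
    intro i
    have h2 := hcol i
    have h0 : (0:ℝ) ≤ ∑ k ∈ Finset.univ.erase i, d k * P k i :=
      Finset.sum_nonneg fun k _ => mul_nonneg (hd k).le (hP0 k i)
    rw [hYd]
    linarith
  exact ⟨fun i => ⟨hYpos i, by rw [abs_of_pos (hYpos i)]; exact hdom i⟩,
    sdd_posdef Y hsym hdom⟩
end

section
/- Let F and Δ be real-valued random variables that are independent, with Var(F) and Var(Δ) finite, and let f = E[F]. Let f_θ be a real number with ε = |f_θ − f|. If ε(ε + 2|f|) < Var(F), then Var(f_θ · Δ) ≤ Var(F · Δ); moreover the inequality is strict whenever Var(Δ) > 0. -/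
open MeasureTheory ProbabilityTheory

theorem stmt_5 {Ω : Type*} [MeasureSpace Ω] (hμ : IsProbabilityMeasure (ℙ : Measure Ω))
    (F Δ : Ω → ℝ)
    (hind : IndepFun F Δ)
    (hF : MemLp F 2 ℙ) (hΔ : MemLp Δ 2 ℙ)
    (f fθ ε : ℝ) (hf : f = ∫ ω, F ω) (hε : ε = |fθ - f|)
    (hcond : ε * (ε + 2 * |f|) < variance F ℙ) :
    variance (fun ω => fθ * Δ ω) ℙ ≤ variance (fun ω => F ω * Δ ω) ℙ ∧
    (0 < variance Δ ℙ →
      variance (fun ω => fθ * Δ ω) ℙ < variance (fun ω => F ω * Δ ω) ℙ) := by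
  have hsq : Measurable fun x : ℝ => x ^ 2 := measurable_id.pow_const 2
  have hindsq : IndepFun (fun ω => F ω ^ 2) (fun ω => Δ ω ^ 2) ℙ :=
    hind.comp hsq hsq
  have hF2 : Integrable (fun ω => F ω ^ 2) ℙ := hF.integrable_sq
  have hΔ2 : Integrable (fun ω => Δ ω ^ 2) ℙ := hΔ.integrable_sq
  have hmul2 : Integrable (fun ω => (F ω * Δ ω) ^ 2) ℙ := by
    have := hindsq.integrable_mul hF2 hΔ2
    simpa [mul_pow, Pi.mul_def] using this
  have hmulL2 : MemLp (fun ω => F ω * Δ ω) 2 ℙ :=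
    (memLp_two_iff_integrable_sq (hF.1.mul hΔ.1)).2 hmul2
  set A := ∫ ω, F ω ^ 2 with hA
  set B := ∫ ω, Δ ω ^ 2 with hB
  set b := ∫ ω, Δ ω with hb
  have hEmul : (∫ ω, F ω * Δ ω) = f * b := by
    rw [hf, hb]
    exact hind.integral_fun_mul_eq_mul_integral hF.1 hΔ.1
  have hEmul2 : (∫ ω, (F ω * Δ ω) ^ 2) = A * B := by
    have := hindsq.integral_fun_mul_eq_mul_integral hF2.1 hΔ2.1
    simpa [mul_pow, hA, hB] using this
  have hVarFΔ : variance (fun ω => F ω * Δ ω) ℙ = A * B - (f * b) ^ 2 := by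
    rw [variance_eq_sub hmulL2]
    simp only [Pi.pow_apply]
    rw [hEmul2, hEmul]
  have hVarΔ : variance Δ ℙ = B - b ^ 2 := by
    rw [variance_eq_sub hΔ]; rfl
  have hVarF : variance F ℙ = A - f ^ 2 := by
    rw [variance_eq_sub hF, hf]; rfl
  have hVarθ : variance (fun ω => fθ * Δ ω) ℙ = fθ ^ 2 * (B - b ^ 2) := by
    rw [variance_const_mul, hVarΔ]
  have habs : fθ ^ 2 - f ^ 2 ≤ ε * (ε + 2 * |f|) := by
    have h1 : ε ^ 2 = (fθ - f) ^ 2 := by rw [hε, sq_abs]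
    have h2 : ε ≥ 0 := hε ▸ abs_nonneg _
    have h3 : |f| ≥ f := le_abs_self f
    have h4 : |f| ≥ -f := neg_le_abs f
    have h5 : ε ≥ fθ - f := hε ▸ le_abs_self _
    have h6 : ε ≥ -(fθ - f) := hε ▸ neg_le_abs _
    nlinarith [sq_nonneg (fθ - f), sq_nonneg f]
  have hAθ : fθ ^ 2 < A := by
    have := hVarF ▸ hcond
    nlinarith
  have hVΔ0 : 0 ≤ B - b ^ 2 := hVarΔ ▸ variance_nonneg Δ ℙ
  have hVF0 : 0 ≤ A - f ^ 2 := hVarF ▸ variance_nonneg F ℙ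
  constructor
  · rw [hVarθ, hVarFΔ]
    nlinarith [sq_nonneg b, sq_nonneg (f * b)]
  · intro hpos
    rw [hVarΔ] at hpos
    rw [hVarθ, hVarFΔ]
    nlinarith [sq_nonneg b]
end
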